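/- Let q be a positive integer and a, b, x, y odd integers, k ≤ r positive integers with a² + q·b² = 2^(2k) and x² + q·y² = 2^(2r). If a·y − x·b = 2^d · R with R an integer and 2 ≤ d ≤ k, then R is even. Consequently, if 4 ∣ (ay − xb), then 2^(k+1) ∣ (ay − xb). -/

import Mathlib

theorem stmt_18 (q : ℤ) (hqpos : 0 < q) (a b x y : ℤ)
    (ha : Odd a) (hb : Odd b) (hx : Odd x) (hy : Odd y)
    (k r : ℕ) (hk : 0 < k) (hkr : k ≤ r)
    (h1 : a^2 + q*b^2 = 2^(2*k)) (h2 : x^2 + q*y^2 = 2^(2*r)) :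
    (∀ (d : ℕ) (R : ℤ), 2 ≤ d → d ≤ k → a*y - x*b = 2^d * R → Even R) ∧
    ((4 : ℤ) ∣ (a*y - x*b) → (2:ℤ)^(k+1) ∣ (a*y - x*b)) := by
  obtain ⟨e, rfl⟩ := Nat.exists_eq_add_of_le hkr
  have h2' : x^2 + q*y^2 = 2^(2*k) * 2^(2*e) := by
    rw [h2, show 2*(k+e) = 2*k + 2*e by ring, pow_add]
  have key : (a*y - x*b)*(a*y + x*b) = 2^(2*k) * (y^2 - 2^(2*e)*b^2) := by
    linear_combination y^2 * h1 - b^2 * h2'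
  have part1 : ∀ (d : ℕ) (R : ℤ), 2 ≤ d → d ≤ k → a*y - x*b = 2^d * R → Even R := by
    intro d R hd2 hdk hEq
    by_contra hR
    rw [Int.not_even_iff_odd] at hR
    obtain ⟨d', rfl⟩ : ∃ d', d = 2 + d' := ⟨d - 2, by omega⟩
    set S : ℤ := 2^(1+d')*R + x*b with hS
    have hsum : a*y + x*b = 2 * S := by
      have : a*y + x*b = (a*y - x*b) + 2*(x*b) := by ring
      rw [this, hEq, hS, show (2:ℤ)^(2+d') = 2*2^(1+d') by rw [pow_add, pow_add]; ring]
      ring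
    have hSodd : Odd S := by
      refine Even.add_odd ?_ (hx.mul hb)
      exact (Even.mul_right ⟨2^d', by rw [pow_add]; ring⟩ R)
    have heq2 : 2^(3+d') * (R*S) = 2^(2*k) * (y^2 - 2^(2*e)*b^2) := by
      rw [← key, hEq, hsum, show (2:ℤ)^(3+d') = 2^(2+d')*2 by rw [pow_add, pow_add]; ring]
      ring
    have hexp : 2*k = (3+d') + (2*k - 3 - d') := by omega
    have hpos : 1 ≤ 2*k - 3 - d' := by omega
    have hRS : R * S = 2^(2*k - 3 - d') * (y^2 - 2^(2*e)*b^2) := by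
      have h23 : (2:ℤ)^(2*k) = 2^(3+d') * 2^(2*k-3-d') := by rw [← pow_add, ← hexp]
      apply mul_left_cancel₀ (a := (2:ℤ)^(3+d')) (by positivity)
      rw [heq2, h23]; ring
    have hEvenRS : Even (R * S) := by
      rw [hRS]
      exact Even.mul_right (Int.even_pow.mpr ⟨even_two, by omega⟩) _
    exact (Int.even_mul.mp hEvenRS).elim (fun h => (Int.not_even_iff_odd.mpr hR) h)
      (fun h => (Int.not_even_iff_odd.mpr hSodd) h)
  refine ⟨part1, ?_⟩
  intro h4
  rcases eq_or_ne (a*y - x*b) 0 with h0 | h0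
  · rw [h0]; exact dvd_zero _
  obtain ⟨R, hEq, hR⟩ := (Int.finiteMultiplicity_iff.mpr
    (⟨by norm_num, h0⟩ : (2:ℤ).natAbs ≠ 1 ∧ a*y - x*b ≠ 0)).exists_eq_pow_mul_and_not_dvd
  set m := multiplicity (2:ℤ) (a*y - x*b) with hm
  have hm2 : 2 ≤ m := by
    by_contra hlt
    push_neg at hlt
    interval_cases m
    · rw [pow_zero, one_mul] at hEq
      exact hR (dvd_trans (by norm_num : (2:ℤ) ∣ 4) (hEq ▸ h4))
    · obtain ⟨c, hc⟩ := h4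
      rw [hEq, pow_one] at hc
      exact hR ⟨c, by linarith⟩
  have hmk : k + 1 ≤ m := by
    by_contra hlt
    push_neg at hlt
    have := part1 m R hm2 (by omega) hEq
    exact hR this.two_dvd
  rw [hEq]
  exact Dvd.dvd.mul_right (pow_dvd_pow 2 hmk) R
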